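/- For every v ∈ F with v^{r+1} = 1 and every function f : F → ℂ, the operator (P_v f)(x) := −f(v·x) commutes with both Ŝ and T̂: Ŝ(P_v f) = P_v(Ŝ f) and T̂(P_v f) = P_v(T̂ f). (This is the commutation of the U^{(r)}-action with the unfolded SL(2,ℤ)-representation, Section 3.3.) -/

import Mathlib

open Complex Finset

/-- For `n ∈ ZMod r`, the complex number `ζ^n = exp(2πi·n̂/r)` where `n̂` is the
canonical lift of `n`. -/
noncomputable def zmodExp (r : ℕ) (n : ZMod r) : ℂ :=
  Complex.exp (2 * Real.pi * Complex.I * (n.val : ℂ) / (r : ℂ))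

/-- The S-matrix of the unfolded SL(2,ℤ)-representation:
`(Ŝf)(x) = ∑_{y ∈ F} ζ^{Tr(x^r·y)}·f(y)`. -/
noncomputable def Shat (r : ℕ) {F : Type*} [Field F] [Fintype F] [Algebra (ZMod r) F]
    (f : F → ℂ) : F → ℂ :=
  fun x => ∑ y : F, zmodExp r (Algebra.trace (ZMod r) F (x ^ r * y)) * f y

/-- The T-matrix of the unfolded SL(2,ℤ)-representation: `(T̂f)(x) = ζ^{−N(x)}·f(x)`. -/
noncomputable def That (r : ℕ) {F : Type*} [Field F] [Fintype F] [Algebra (ZMod r) F]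
    (f : F → ℂ) : F → ℂ :=
  fun x => zmodExp r (-(Algebra.norm (ZMod r) x)) * f x

/-- For every `v ∈ F` with `v^{r+1} = 1`, the operator `(P_v f)(x) := −f(v·x)` commutes
with both `Ŝ` and `T̂`. -/
theorem stmt0 (r : ℕ) (hr : r.Prime) (hodd : Odd r) (h3 : r % 3 = 2)
    (F : Type*) [Field F] [Fintype F] [Algebra (ZMod r) F]
    (hcard : Fintype.card F = r ^ 2)
    (v : F) (hv : v ^ (r + 1) = 1) (f : F → ℂ) :
    Shat r (fun x => -f (v * x)) = (fun x => -(Shat r f (v * x))) ∧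
    That r (fun x => -f (v * x)) = (fun x => -(That r f (v * x))) := by
  haveI : Fact r.Prime := ⟨hr⟩
  haveI : CharP F r := by
    rw [← Algebra.charP_iff (ZMod r) F r]; exact ZMod.charP r
  have hvne : v ≠ 0 := by
    intro h
    rw [h, zero_pow (Nat.succ_ne_zero r)] at hv
    exact zero_ne_one hv
  have key : ∀ x y : F, (v * x) ^ r * (v * y) = x ^ r * y := by
    intro x y
    have hvv : v ^ r * v = 1 := by rw [← pow_succ]; exact hv
    calc (v * x) ^ r * (v * y) = (v ^ r * v) * (x ^ r * y) := by rw [mul_pow]; ring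
    _ = x ^ r * y := by rw [hvv, one_mul]
  -- the norm of v is 1
  have hNv : Algebra.norm (ZMod r) v = 1 := by
    let τ : F ≃ₐ[ZMod r] F :=
      { frobeniusEquiv F r with
        commutes' := fun c => by
          show frobenius F r (algebraMap (ZMod r) F c) = algebraMap (ZMod r) F c
          rw [frobenius_def, ← map_pow, ZMod.pow_card] }
    have hτ : ∀ x : F, τ x = x ^ r := fun x => rfl
    have hτne : (1 : F ≃ₐ[ZMod r] F) ≠ τ := by
      intro h
      have hall : ∀ x : F, x ^ r = x := fun x => by
        have := congrArg (fun σ : F ≃ₐ[ZMod r] F => σ x) h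
        simpa [hτ] using this.symm
      haveI : Fintype Fˣ := Fintype.ofFinite Fˣ
      obtain ⟨g, hg⟩ := IsCyclic.exists_generator (α := Fˣ)
      have hgr : g ^ r = g := Units.ext (by
        rw [Units.val_pow_eq_pow_val]; exact hall g)
      have hg1 : g ^ (r - 1) = 1 := by
        have h1 : g ^ (r - 1) * g = 1 * g := by
          rw [← pow_succ, Nat.sub_add_cancel hr.one_lt.le, hgr, one_mul]
        exact mul_right_cancel h1
      have hdvd : orderOf g ∣ r - 1 := orderOf_dvd_of_pow_eq_one hg1
      have hord : orderOf g = Nat.card Fˣ :=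
        orderOf_eq_card_of_forall_mem_zpowers hg
      have hle : Nat.card Fˣ ≤ r - 1 :=
        hord ▸ Nat.le_of_dvd (Nat.sub_pos_of_lt hr.one_lt) hdvd
      rw [Nat.card_units, Nat.card_eq_fintype_card, hcard] at hle
      have h2 : 2 ≤ r := hr.two_le
      have h1 : r < r ^ 2 := by nlinarith
      generalize r ^ 2 = s at hle h1
      omega
    haveI : FiniteDimensional (ZMod r) F := Module.Finite.of_finite
    haveI := Classical.decEq (F ≃ₐ[ZMod r] F)
    have hfr : Module.finrank (ZMod r) F = 2 := by
      have h := Module.card_eq_pow_finrank (K := ZMod r) (V := F)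
      rw [ZMod.card, hcard] at h
      exact Nat.pow_right_injective hr.two_le h.symm
    have hcardG : Fintype.card (F ≃ₐ[ZMod r] F) = 2 := by
      rw [← Nat.card_eq_fintype_card, IsGalois.card_aut_eq_finrank, hfr]
    have huniv : (Finset.univ : Finset (F ≃ₐ[ZMod r] F)) = {1, τ} := by
      symm
      apply Finset.eq_univ_of_card
      rw [Finset.card_pair hτne, hcardG]
    have h1 := Algebra.norm_eq_prod_automorphisms (K := ZMod r) v
    rw [huniv, Finset.prod_pair hτne] at h1
    have h2 : algebraMap (ZMod r) F (Algebra.norm (ZMod r) v) = 1 := by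
      rw [h1]
      show v * v ^ r = 1
      rw [← pow_succ']
      exact hv
    exact (algebraMap (ZMod r) F).injective (by rw [h2, map_one])
  constructor
  · funext x
    show (∑ y : F, zmodExp r (Algebra.trace (ZMod r) F (x ^ r * y)) * -f (v * y))
        = -∑ y : F, zmodExp r (Algebra.trace (ZMod r) F ((v * x) ^ r * y)) * f y
    rw [← Finset.sum_neg_distrib]
    apply Fintype.sum_bijective (fun y : F => v * y) (mulLeft_bijective₀ v hvne)
    intro y
    simp only [key]
    ring
  · funext x
    have hN : Algebra.norm (ZMod r) (v * x) = Algebra.norm (ZMod r) x := by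
      rw [map_mul, hNv, one_mul]
    show zmodExp r (-(Algebra.norm (ZMod r) x)) * -f (v * x)
        = -(zmodExp r (-(Algebra.norm (ZMod r) (v * x))) * f (v * x))
    rw [hN]
    ring
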